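/- arXiv:0704.2282 — 3 statements merged into one kernel-verified Lean document; each statement's English description precedes it below -/
import Mathlib

section
/- Let W and W' be Kekulé states of a graph G. Then the subgraph C = W ⊕ W' is a curve in G and (C, W) is an alternating curve in G. -/
open scoped symmDiff

namespace Kekule

abbrev Node := ℕ
abbrev Graph := Finset (Finset Node)

/-- `G` is a graph: every edge is a 2-element set of nodes. -/
def IsGraph (G : Graph) : Prop := ∀ e ∈ G, e.card = 2

/-- The nodes of a graph: the elements of its edges. -/
def nodes (G : Graph) : Finset Node := G.biUnion id

/-- The number of edges of `G` containing `v`. -/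
def deg (G : Graph) (v : Node) : ℕ := (G.filter (fun e => v ∈ e)).card

/-- A port is a node contained in exactly one edge. -/
def ports (G : Graph) : Finset Node := (nodes G).filter (fun v => deg G v = 1)

/-- An internal node is a node that is not a port. -/
def internal (G : Graph) : Finset Node := (nodes G).filter (fun v => deg G v ≠ 1)

/-- A Kekulé state of `G`: a subgraph `W ⊆ G` such that every internal node
of `G` lies in exactly one edge of `W`. -/
def IsKekule (G W : Graph) : Prop := W ⊆ G ∧ ∀ v ∈ internal G, deg W v = 1

/-- A curve in `G`: a subgraph `C ⊆ G` such that every node of `C` that is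
internal in `G` lies in exactly two edges of `C`. -/
def IsCurve (G C : Graph) : Prop :=
  C ⊆ G ∧ ∀ v ∈ nodes C, v ∈ internal G → deg C v = 2

/-- `(C, W)` is an alternating curve in `G`: both are subgraphs of `G`,
`C` is a curve in `G`, and `W ∩ C` is a Kekulé state of `C`. -/
def IsAlternating (G C W : Graph) : Prop :=
  W ⊆ G ∧ IsCurve G C ∧ IsKekule C (W ∩ C)

/-- `W|P`: the set of ports in `P` that lie in some edge of `W`. -/
def rest (W : Graph) (P : Finset Node) : Finset Node := P ∩ nodes W

/-- The set of Kekulé port assignments of `G`. -/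
def KP (G : Graph) : Set (Finset Node) :=
  {g | ∃ W, IsKekule G W ∧ rest W (ports G) = g}

/-- A cell `K` over `P` is a Kekulé cell if it is the set of Kekulé port
assignments of some graph with port set `P`. -/
def IsKekuleCell (P : Finset Node) (K : Set (Finset Node)) : Prop :=
  ∃ G, IsGraph G ∧ ports G = P ∧ KP G = K

/-- A channel: a 2-element subset of `P`. -/
def IsChannel (P : Finset Node) (c : Finset Node) : Prop := c ⊆ P ∧ c.card = 2

/-- A port `p` is flexible for a cell `K`. -/
def Flexible (K : Set (Finset Node)) (p : Node) : Prop :=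
  ∃ g ∈ K, ∃ g' ∈ K, p ∈ g ∧ p ∉ g'

/-- Hamming distance between two port assignments. -/
def hdist (k k' : Finset Node) : ℕ := (k ∆ k').card

/-- The Hamming diameter of `K` equals `n`. -/
def HamDiamEq (K : Set (Finset Node)) (n : ℕ) : Prop :=
  (∃ k ∈ K, ∃ k' ∈ K, hdist k k' = n) ∧ ∀ k ∈ K, ∀ k' ∈ K, hdist k k' ≤ n

/-- `G` is connected: nonempty, and any two distinct nodes are joined by a walk. -/
def Connected (G : Graph) : Prop :=
  G.Nonempty ∧ ∀ p ∈ nodes G, ∀ q ∈ nodes G, p ≠ q →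
    ∃ (n : ℕ) (f : ℕ → Node), f 0 = p ∧ f n = q ∧
      ∀ i < n, ({f i, f (i + 1)} : Finset Node) ∈ G

/-- `C` is a simple path between `p` and `q`. -/
def IsSimplePath (C : Graph) (p q : Node) : Prop :=
  Connected C ∧ ports C = {p, q} ∧
    ∀ v ∈ nodes C, v ≠ p → v ≠ q → deg C v = 2

/-- A cycle: a connected graph all of whose nodes lie in exactly two edges. -/
def IsCycle (C : Graph) : Prop :=
  Connected C ∧ ∀ v ∈ nodes C, deg C v = 2

/-- A semi-Kekulé state of `G`: every internal node of `G` lies in an odd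
number of edges of `W`. -/
def IsSemiKekule (G W : Graph) : Prop :=
  W ⊆ G ∧ ∀ v ∈ internal G, deg W v % 2 = 1

/-- The signature of `G`. -/
def sig (G : Graph) : ℕ := (internal G).card % 2

/-- `G` is omniconjugated. -/
def Omniconjugated (G : Graph) : Prop :=
  2 ≤ (ports G).card ∧ KP G = {g | g ⊆ ports G ∧ g.card % 2 = sig G}

instance : Std.Commutative (α := Finset Node) (· ∆ ·) := ⟨symmDiff_comm⟩
instance : Std.Associative (α := Finset Node) (· ∆ ·) := ⟨symmDiff_assoc⟩

/-- The `⊕`-sum of a finite family of port assignments. -/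
def xorSum (D : Finset (Finset Node)) : Finset Node := D.fold (· ∆ ·) ∅ id

lemma mem_nodes' {X : Graph} {v : Node} : v ∈ nodes X ↔ ∃ e ∈ X, v ∈ e := by
  simp [nodes]

lemma deg_pos' {X : Graph} {v : Node} : v ∈ nodes X ↔ 0 < deg X v := by
  simp [mem_nodes', deg, Finset.card_pos, Finset.filter_nonempty_iff]

lemma deg_mono {X Y : Graph} (h : X ⊆ Y) (v : Node) : deg X v ≤ deg Y v :=
  Finset.card_le_card (Finset.filter_subset_filter _ h)

lemma filter_symmDiff' (X Y : Graph) (p : Finset Node → Prop) [DecidablePred p] :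
    (X ∆ Y).filter p = X.filter p ∆ Y.filter p := by
  ext e; simp [Finset.mem_symmDiff, Finset.mem_filter]; tauto

lemma inter_symmDiff' (X Y : Graph) : X ∩ (X ∆ Y) = X \ Y := by
  ext e; simp [Finset.mem_symmDiff]; tauto

/-- If `W` and `W'` are Kekulé states of `G`, then `C = W ⊕ W'`
is a curve in `G` and `(C, W)` is an alternating curve in `G`. -/
theorem statement0 (G W W' : Graph) (hG : IsGraph G)
    (hW : IsKekule G W) (hW' : IsKekule G W') :
    IsCurve G (W ∆ W') ∧ IsAlternating G (W ∆ W') W := by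
  have hCsub : W ∆ W' ⊆ G := by
    intro e he
    rcases Finset.mem_symmDiff.mp he with ⟨h1, _⟩ | ⟨h1, _⟩
    · exact hW.1 h1
    · exact hW'.1 h1
  -- key degree computation for internal nodes of G lying in nodes of C
  have key : ∀ v ∈ nodes (W ∆ W'), v ∈ internal G →
      deg (W ∆ W') v = 2 ∧ deg (W ∩ (W ∆ W')) v = 1 := by
    intro v hv hint
    obtain ⟨a, ha⟩ := Finset.card_eq_one.mp (hW.2 v hint)
    obtain ⟨b, hb⟩ := Finset.card_eq_one.mp (hW'.2 v hint)
    have hC : (W ∆ W').filter (fun e => v ∈ e) = ({a} : Graph) ∆ {b} := by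
      rw [filter_symmDiff', ha, hb]
    have hne : a ≠ b := by
      intro hab
      have : deg (W ∆ W') v = 0 := by
        rw [deg, hC, hab, symmDiff_self]; simp
      have := deg_pos'.mp hv
      omega
    have hab : ({a} : Graph) ∆ {b} = {a, b} := by
      ext e; simp [Finset.mem_symmDiff]
      constructor
      · tauto
      · rintro (rfl | rfl) <;> simp [hne, hne.symm]
    constructor
    · rw [deg, hC, hab, Finset.card_insert_of_notMem (by simp [hne]),
        Finset.card_singleton]
    · have hsd : (W \ W').filter (fun e => v ∈ e)
          = W.filter (fun e => v ∈ e) \ W'.filter (fun e => v ∈ e) := by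
        ext e; simp [Finset.mem_filter]; tauto
      rw [deg, inter_symmDiff', hsd, ha, hb]
      rw [Finset.sdiff_eq_self_of_disjoint (by simp [hne.symm, hne])]
      simp
  have hcurve : IsCurve G (W ∆ W') := by
    refine ⟨hCsub, fun v hv hint => (key v hv hint).1⟩
  refine ⟨hcurve, hW.1, hcurve, ?_, ?_⟩
  · exact Finset.inter_subset_right
  · intro v hv
    have hv' := Finset.mem_filter.mp hv
    have hvC : v ∈ nodes (W ∆ W') := hv'.1
    have hvG : v ∈ nodes G := by
      rcases mem_nodes'.mp hvC with ⟨e, he, hve⟩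
      exact mem_nodes'.mpr ⟨e, hCsub he, hve⟩
    by_cases hint : v ∈ internal G
    · exact (key v hvC hint).2
    · exfalso
      have hdG : deg G v = 1 := by
        have := Finset.mem_filter.not.mp hint
        simp only [hvG, true_and, not_not] at this
        exact this
      have h1 : deg (W ∆ W') v ≤ 1 := hdG ▸ deg_mono hCsub v
      have h2 := deg_pos'.mp hvC
      exact hv'.2 (by omega)
end Kekule
end

section
/- Let W be a Kekulé state of a graph G and let (C, W) be an alternating curve in G. Then W' = W ⊕ C is a Kekulé state of G. -/
open scoped symmDiff

namespace Kekule

/-- If `W` is a Kekulé state of `G` and `(C, W)` is an alternating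
curve in `G`, then `W' = W ⊕ C` is a Kekulé state of `G`. -/
theorem statement1 (G W C : Graph) (hG : IsGraph G)
    (hW : IsKekule G W) (hC : IsAlternating G C W) :
    IsKekule G (W ∆ C) := by
  obtain ⟨hWG, hWdeg⟩ := hW
  obtain ⟨_, ⟨hCG, hCdeg⟩, hWCsub, hWCdeg⟩ := hC
  constructor
  · intro e he
    rw [Finset.mem_symmDiff] at he
    rcases he with ⟨h1, _⟩ | ⟨h1, _⟩
    · exact hWG h1
    · exact hCG h1
  · intro v hv
    by_cases hvC : v ∈ nodes C
    · -- deg C v = 2, v internal in C, deg (W ∩ C) v = 1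
      have hdC : deg C v = 2 := hCdeg v hvC hv
      have hvint : v ∈ internal C := by
        rw [internal, Finset.mem_filter]
        exact ⟨hvC, by omega⟩
      have hdWC : deg (W ∩ C) v = 1 := hWCdeg v hvint
      have hdW : deg W v = 1 := hWdeg v hv
      -- card formula
      unfold deg at *
      rw [show ((W ∆ C).filter (fun e => v ∈ e)) =
          (W.filter (fun e => v ∈ e)) ∆ (C.filter (fun e => v ∈ e)) from by
        ext e; simp [Finset.mem_symmDiff, Finset.mem_filter]; tauto]
      set A := W.filter (fun e => v ∈ e)
      set B := C.filter (fun e => v ∈ e)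
      have hAB : (W ∩ C).filter (fun e => v ∈ e) = A ∩ B := by
        ext e; simp [A, B, Finset.mem_filter]; tauto
      rw [hAB] at hdWC
      have h1 : A ∆ B = (A ∪ B) \ (A ∩ B) := symmDiff_eq_sup_sdiff_inf A B
      have h2 : (A ∪ B).card + (A ∩ B).card = A.card + B.card :=
        Finset.card_union_add_card_inter A B
      have h3 : ((A ∪ B) \ (A ∩ B)).card = (A ∪ B).card - (A ∩ B).card :=
        Finset.card_sdiff_of_subset (Finset.inter_subset_union)
      rw [h1, h3]
      omega
    · -- filter of C is empty
      have hB : C.filter (fun e => v ∈ e) = ∅ := by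
        rw [Finset.filter_eq_empty_iff]
        intro e he hve
        exact hvC (Finset.mem_biUnion.mpr ⟨e, he, hve⟩)
      have : (W ∆ C).filter (fun e => v ∈ e) = W.filter (fun e => v ∈ e) := by
        ext e
        simp only [Finset.mem_filter, Finset.mem_symmDiff]
        constructor
        · rintro ⟨h, hve⟩
          rcases h with ⟨h1, _⟩ | ⟨h1, _⟩
          · exact ⟨h1, hve⟩
          · exact absurd (Finset.mem_biUnion.mpr ⟨e, h1, hve⟩) hvC
        · rintro ⟨h1, hve⟩
          refine ⟨Or.inl ⟨h1, fun h2 => ?_⟩, hve⟩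
          exact hvC (Finset.mem_biUnion.mpr ⟨e, h2, hve⟩)
      unfold deg
      rw [this]
      exact hWdeg v hv
end Kekule
end

section
/- Let G be a graph with port set P = pG, let g ⊆ P be a port assignment, and let n be the number of Kekulé states W of G with W|P = g. Then for every Kekulé state W of G with W|P = g, there are precisely n curves C in G, none of whose nodes is a port of G, such that (C, W) is an alternating curve (the empty curve counted among them). -/
open scoped symmDiff

namespace Kekule

/-! ### Auxiliary lemmas -/

lemma mem_nodes_iff {X : Graph} {v : Node} :
    v ∈ nodes X ↔ (X.filter (fun e => v ∈ e)).Nonempty := by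
  simp [nodes, Finset.filter_nonempty_iff]

lemma nodes_mono {C G : Graph} (h : C ⊆ G) : nodes C ⊆ nodes G :=
  Finset.biUnion_subset_biUnion_of_subset_left id h

lemma filter_symmDiff'_s2 (A B : Graph) (v : Node) :
    (A ∆ B).filter (fun e => v ∈ e)
      = A.filter (fun e => v ∈ e) ∆ B.filter (fun e => v ∈ e) := by
  ext e
  simp only [Finset.mem_filter, Finset.mem_symmDiff]
  tauto

lemma filter_inter' (A B : Graph) (v : Node) :
    (A ∩ B).filter (fun e => v ∈ e)
      = A.filter (fun e => v ∈ e) ∩ B.filter (fun e => v ∈ e) := by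
  ext e
  simp only [Finset.mem_filter, Finset.mem_inter]
  tauto

lemma symmDiff_subset' {A B G : Graph} (hA : A ⊆ G) (hB : B ⊆ G) : A ∆ B ⊆ G := by
  intro e he
  rcases Finset.mem_symmDiff.1 he with ⟨h, _⟩ | ⟨h, _⟩
  · exact hA h
  · exact hB h

lemma singleton_symmDiff_singleton {e₁ e₂ : Finset Node} (h : e₁ ≠ e₂) :
    ({e₁} : Graph) ∆ {e₂} = {e₁, e₂} := by
  ext x
  simp only [Finset.mem_symmDiff, Finset.mem_singleton, Finset.mem_insert]
  constructor
  · tauto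
  · rintro (rfl | rfl)
    · exact Or.inl ⟨rfl, h⟩
    · exact Or.inr ⟨rfl, fun hx => h hx.symm⟩

/-- For a port `p` of `G`, membership of `p` in `nodes W` is determined by the
port assignment `rest W (ports G)`. -/
lemma port_mem_nodes {G W : Graph} {g : Finset Node}
    (hWP : rest W (ports G) = g) {p : Node} (hp : p ∈ ports G) :
    p ∈ nodes W ↔ p ∈ g := by
  rw [← hWP, rest, Finset.mem_inter]
  tauto

/-- A port lies in a unique edge of `G`. -/
lemma port_edge_unique {G : Graph} {p : Node} (hp : p ∈ ports G)
    {e e' : Finset Node} (he : e ∈ G) (hpe : p ∈ e) (he' : e' ∈ G) (hpe' : p ∈ e') :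
    e = e' := by
  have h1 : deg G p = 1 := (Finset.mem_filter.1 hp).2
  have := Finset.card_le_one.1 (le_of_eq h1)
  exact this e (Finset.mem_filter.2 ⟨he, hpe⟩) e' (Finset.mem_filter.2 ⟨he', hpe'⟩)

/-- Direction A: the symmetric difference of two Kekulé states with the same
port assignment is a curve avoiding all ports, alternating with `W`. -/
lemma curve_of_kekule {G : Graph} {g : Finset Node} {W W' : Graph}
    (hW : IsKekule G W) (hWP : rest W (ports G) = g)
    (hW' : IsKekule G W') (hW'P : rest W' (ports G) = g) :
    (∀ v ∈ nodes (W ∆ W'), v ∉ ports G) ∧ IsAlternating G (W ∆ W') W := by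
  set C := W ∆ W' with hC
  have hCG : C ⊆ G := symmDiff_subset' hW.1 hW'.1
  -- no node of C is a port
  have hport : ∀ v ∈ nodes C, v ∉ ports G := by
    intro v hv hvP
    obtain ⟨e, heC, hve⟩ := by
      simpa [nodes, Finset.mem_biUnion] using hv
    have heG : e ∈ G := hCG heC
    rcases Finset.mem_symmDiff.1 heC with ⟨heW, heW'⟩ | ⟨heW', heW⟩
    · have hvW : v ∈ nodes W := by
        rw [mem_nodes_iff]; exact ⟨e, Finset.mem_filter.2 ⟨heW, hve⟩⟩
      have hvg : v ∈ g := (port_mem_nodes hWP hvP).1 hvW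
      have hvW' : v ∈ nodes W' := (port_mem_nodes hW'P hvP).2 hvg
      obtain ⟨e', he'⟩ := mem_nodes_iff.1 hvW'
      obtain ⟨he'W', hve'⟩ := Finset.mem_filter.1 he'
      have : e = e' := port_edge_unique hvP heG hve (hW'.1 he'W') hve'
      exact heW' (this ▸ he'W')
    · have hvW' : v ∈ nodes W' := by
        rw [mem_nodes_iff]; exact ⟨e, Finset.mem_filter.2 ⟨heW', hve⟩⟩
      have hvg : v ∈ g := (port_mem_nodes hW'P hvP).1 hvW'
      have hvW : v ∈ nodes W := (port_mem_nodes hWP hvP).2 hvg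
      obtain ⟨e', he'⟩ := mem_nodes_iff.1 hvW
      obtain ⟨he'W, hve'⟩ := Finset.mem_filter.1 he'
      have : e = e' := port_edge_unique hvP heG hve (hW.1 he'W) hve'
      exact heW (this ▸ he'W)
  -- at an internal node of G lying on C, the filters are distinct singletons
  have key : ∀ v ∈ nodes C, v ∈ internal G →
      ∃ e₁ e₂, e₁ ≠ e₂ ∧ W.filter (fun e => v ∈ e) = {e₁} ∧
        W'.filter (fun e => v ∈ e) = {e₂} := by
    intro v hvC hvI
    obtain ⟨e₁, h1⟩ := Finset.card_eq_one.1 (hW.2 v hvI)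
    obtain ⟨e₂, h2⟩ := Finset.card_eq_one.1 (hW'.2 v hvI)
    refine ⟨e₁, e₂, ?_, h1, h2⟩
    rintro rfl
    obtain ⟨e, he⟩ := mem_nodes_iff.1 hvC
    rw [hC, filter_symmDiff'_s2, h1, h2, symmDiff_self] at he
    exact absurd he (Finset.notMem_empty e)
  have hcurve : IsCurve G C := by
    refine ⟨hCG, ?_⟩
    intro v hvC hvI
    obtain ⟨e₁, e₂, hne, h1, h2⟩ := key v hvC hvI
    rw [deg, filter_symmDiff'_s2, h1, h2, singleton_symmDiff_singleton hne]
    exact Finset.card_pair hne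
  refine ⟨hport, hW.1, hcurve, Finset.inter_subset_right, ?_⟩
  intro v hvI
  obtain ⟨hvC, -⟩ := Finset.mem_filter.1 hvI
  have hvG : v ∈ internal G := by
    have hvnG : v ∈ nodes G := nodes_mono hCG hvC
    refine Finset.mem_filter.2 ⟨hvnG, fun h1 => ?_⟩
    exact hport v hvC (Finset.mem_filter.2 ⟨hvnG, h1⟩)
  obtain ⟨e₁, e₂, hne, h1, h2⟩ := key v hvC hvG
  rw [deg, filter_inter', h1, hC, filter_symmDiff'_s2, h1, h2]
  rw [singleton_symmDiff_singleton hne]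
  rw [show ({e₁} : Graph) ∩ {e₁, e₂} = {e₁} by
    apply Finset.inter_eq_left.2; intro x hx
    rw [Finset.mem_singleton] at hx; subst hx; exact Finset.mem_insert_self _ _]
  exact Finset.card_singleton _

/-- Direction B: flipping a Kekulé state along an alternating curve avoiding
ports yields a Kekulé state with the same port assignment. -/
lemma kekule_of_curve {G : Graph} {g : Finset Node} {W C : Graph}
    (hW : IsKekule G W) (hWP : rest W (ports G) = g)
    (hport : ∀ v ∈ nodes C, v ∉ ports G) (halt : IsAlternating G C W) :
    IsKekule G (W ∆ C) ∧ rest (W ∆ C) (ports G) = g := by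
  obtain ⟨-, hcurve, -, hker⟩ := halt
  constructor
  · refine ⟨symmDiff_subset' hW.1 hcurve.1, ?_⟩
    intro v hvI
    have hWv : deg W v = 1 := hW.2 v hvI
    by_cases hvC : v ∈ nodes C
    · have hCv : deg C v = 2 := hcurve.2 v hvC hvI
      have hvIC : v ∈ internal C := by
        refine Finset.mem_filter.2 ⟨hvC, ?_⟩
        rw [hCv]; norm_num
      have hWC : deg (W ∩ C) v = 1 := hker v hvIC
      -- the unique W-edge at v lies on C
      rw [deg, filter_inter'] at hWC
      have hsub : W.filter (fun e => v ∈ e) ⊆ C.filter (fun e => v ∈ e) := by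
        rw [← Finset.inter_eq_left]
        apply Finset.eq_of_subset_of_card_le Finset.inter_subset_left
        rw [hWC]; exact le_of_eq hWv
      rw [deg, filter_symmDiff'_s2, symmDiff_of_le hsub, Finset.card_sdiff_of_subset hsub]
      rw [show (C.filter (fun e => v ∈ e)).card = 2 from hCv,
        show (W.filter (fun e => v ∈ e)).card = 1 from hWv]
    · have hCfil : C.filter (fun e => v ∈ e) = ∅ := by
        rw [← Finset.not_nonempty_iff_eq_empty]
        exact fun h => hvC (mem_nodes_iff.2 h)
      rw [deg, filter_symmDiff'_s2, hCfil, show (∅:Graph) = ⊥ from rfl, symmDiff_bot]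
      exact hWv
  · rw [← hWP]
    apply Finset.ext
    intro p
    simp only [rest, Finset.mem_inter, and_congr_right_iff]
    intro hpP
    have hCfil : C.filter (fun e => p ∈ e) = ∅ := by
      rw [← Finset.not_nonempty_iff_eq_empty]
      exact fun h => hport p (mem_nodes_iff.2 h) hpP
    rw [mem_nodes_iff, mem_nodes_iff, filter_symmDiff'_s2, hCfil,
      show (∅:Graph) = ⊥ from rfl, symmDiff_bot]

/-- If `n` is the number of Kekulé states of `G` with port
assignment `g`, then for every Kekulé state `W` with `W|P = g` there are
precisely `n` curves `C`, none of whose nodes is a port of `G`, such that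
`(C, W)` is an alternating curve. -/
theorem statement2 (G : Graph) (hG : IsGraph G)
    (g : Finset Node) (hg : g ⊆ ports G)
    (n : ℕ) (hn : n = Nat.card {W : Graph // IsKekule G W ∧ rest W (ports G) = g})
    (W : Graph) (hW : IsKekule G W) (hWP : rest W (ports G) = g) :
    Nat.card {C : Graph // (∀ v ∈ nodes C, v ∉ ports G) ∧ IsAlternating G C W} = n := by
  have P := ports G
  let e : {W' : Graph // IsKekule G W' ∧ rest W' (ports G) = g} ≃
      {C : Graph // (∀ v ∈ nodes C, v ∉ ports G) ∧ IsAlternating G C W} :=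
    { toFun := fun W' => ⟨W ∆ W'.1, curve_of_kekule hW hWP W'.2.1 W'.2.2⟩
      invFun := fun C => ⟨W ∆ C.1, kekule_of_curve hW hWP C.2.1 C.2.2⟩
      left_inv := fun W' => Subtype.ext (symmDiff_symmDiff_cancel_left W W'.1)
      right_inv := fun C => Subtype.ext (symmDiff_symmDiff_cancel_left W C.1) }
  rw [hn]
  exact Nat.card_congr e.symm
end Kekule
end
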